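/- Let v ∈ W be a nonzero vector. Suppose S ⊆ Λ is a subsemigroup such that (i) S + A = Λ, i.e., every element of Λ can be written as s + a with s ∈ S and a ∈ A, and (ii) there is a convex cone C ⊆ W, open in the subspace topology of W and containing v, with A ∩ C ⊆ S. Then there exists a convex cone C̃ ⊆ V, open in V and containing v, such that Λ ∩ C̃ ⊆ S. -/

import Mathlib

set_option maxHeartbeats 1000000 in
/-- Let `V` be a finite-dimensional real vector space, `Λ ⊆ V` the lattice generated by a
basis `b`, `W` a subspace such that `A := Λ ∩ W` spans `W`, and `S ⊆ Λ` a subsemigroup such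
that `S + A = Λ` and such that `A ∩ C ⊆ S` for some cone `C ⊆ W` that is open in the subspace
topology of `W`, convex and containing a given nonzero `v ∈ W`. Then there is an open convex
cone `C̃ ⊆ V` containing `v` with `Λ ∩ C̃ ⊆ S`. -/
theorem stmt_1 {V : Type*} [NormedAddCommGroup V] [NormedSpace ℝ V] [FiniteDimensional ℝ V]
    {ι : Type*} [Fintype ι] (b : Module.Basis ι ℝ V)
    (Λ : AddSubgroup V) (hΛ : Λ = AddSubgroup.closure (Set.range b))
    (W : Submodule ℝ V)
    (A : AddSubgroup V) (hA : (A : Set V) = (Λ : Set V) ∩ (W : Set V))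
    (hAspan : Submodule.span ℝ (A : Set V) = W)
    (S : Set V) (hSΛ : S ⊆ (Λ : Set V)) (hSadd : ∀ x ∈ S, ∀ y ∈ S, x + y ∈ S)
    (v : V) (hvW : v ∈ W) (hv0 : v ≠ 0)
    (hcover : ∀ l ∈ Λ, ∃ s ∈ S, ∃ a ∈ A, l = s + a)
    (hcone : ∃ C : Set V, C ⊆ (W : Set V) ∧ Convex ℝ C ∧
      (∀ x ∈ C, ∀ t : ℝ, 0 < t → t • x ∈ C) ∧
      (∃ U : Set V, IsOpen U ∧ C = U ∩ (W : Set V)) ∧ v ∈ C ∧ (A : Set V) ∩ C ⊆ S) :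
    ∃ C : Set V, Convex ℝ C ∧ (∀ x ∈ C, ∀ t : ℝ, 0 < t → t • x ∈ C) ∧
      IsOpen C ∧ v ∈ C ∧ (Λ : Set V) ∩ C ⊆ S := by
  classical
  obtain ⟨C, hCW, hCconv, hCcone, ⟨U, hUopen, hCU⟩, hvC, hACS⟩ := hcone
  obtain ⟨δ, hδpos, hδball⟩ := Metric.isOpen_iff.1 hUopen v (by rw [hCU] at hvC; exact hvC.1)
  -- ### Algebraic setup: the lattice as a `ℤ`-module and the quotient by `A`
  set M : Submodule ℤ V := Submodule.span ℤ (Set.range ⇑b) with hM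
  have hMΛ : ∀ x : V, x ∈ Λ ↔ x ∈ M := by
    intro x
    rw [hΛ, ← Submodule.span_int_eq_addSubgroupClosure]
    exact Iff.rfl
  have hAW : (A : Set V) ⊆ (W : Set V) := by rw [hA]; exact Set.inter_subset_right
  have hAΛ : (A : Set V) ⊆ (Λ : Set V) := by rw [hA]; exact Set.inter_subset_left
  haveI : Module.Finite ℤ M := Module.Finite.span_of_finite ℤ (Set.finite_range _)
  set N : Submodule ℤ M := (AddSubgroup.toIntSubmodule A).comap M.subtype with hN
  have hmemN : ∀ x : M, x ∈ N ↔ (x : V) ∈ A := fun x => Iff.rfl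
  haveI : NoZeroSMulDivisors ℤ (M ⧸ N) := by
    constructor
    intro c q hcq
    by_cases hc : c = 0
    · exact Or.inl hc
    right
    obtain ⟨x, rfl⟩ := Submodule.Quotient.mk_surjective N q
    rw [← Submodule.Quotient.mk_smul, Submodule.Quotient.mk_eq_zero] at hcq
    rw [Submodule.Quotient.mk_eq_zero]
    have h1 : ((c • x : M) : V) ∈ A := (hmemN _).1 hcq
    have h2 : c • (x : V) ∈ W := hAW h1
    have h3 : (x : V) ∈ W := by
      have h4 : ((c : ℝ)) • (x : V) ∈ W := by rwa [Int.cast_smul_eq_zsmul]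
      have h5 := W.smul_mem ((c : ℝ)⁻¹) h4
      rwa [inv_smul_smul₀ (by exact_mod_cast hc)] at h5
    have : (x : V) ∈ (A : Set V) := hA ▸ ⟨(hMΛ _).2 x.2, h3⟩
    exact this
  set Q := M ⧸ N with hQ
  set κ := Module.Free.ChooseBasisIndex ℤ Q with hκ
  set β : Module.Basis κ ℤ Q := Module.Free.chooseBasis ℤ Q with hβ
  choose g hg using fun i : κ => Submodule.Quotient.mk_surjective N (β i)
  set n : M →ₗ[ℤ] (κ →₀ ℤ) := β.repr.toLinearMap ∘ₗ N.mkQ with hn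
  have defect : ∀ x : M, x - ∑ i, n x i • g i ∈ N := by
    intro x
    rw [← Submodule.Quotient.mk_eq_zero, ← Submodule.mkQ_apply, map_sub, map_sum]
    simp_rw [map_zsmul]
    have h2 : ∀ i, N.mkQ (g i) = β i := fun i => hg i
    simp_rw [h2]
    have h3 : ∑ i, n x i • β i = N.mkQ x := by
      have := β.sum_repr (N.mkQ x)
      exact this
    rw [h3, sub_self]
  -- ### The coordinate functionals `f i`
  have libZ : LinearIndependent ℤ ⇑b :=
    b.linearIndependent.restrict_scalars (by
      intro x y h
      simp only [zsmul_eq_mul, mul_one] at h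
      exact_mod_cast h)
  let bM : Module.Basis ι ℤ M := Module.Basis.span libZ
  have hbM : ∀ j, b j ∈ M := fun j => Submodule.subset_span ⟨j, rfl⟩
  have hbMj : ∀ j, (bM j : V) = b j := fun j => congrArg Subtype.val (Module.Basis.span_apply libZ j)
  set f : κ → (V →ₗ[ℝ] ℝ) := fun i => b.constr ℝ (fun j => ((n ⟨b j, hbM j⟩) i : ℝ)) with hf
  have key : ∀ (i : κ) (x : M), f i (x : V) = ((n x) i : ℝ) := by
    intro i
    have hmaps : ((f i).restrictScalars ℤ).comp M.subtype
        = ((Int.castAddHom ℝ).toIntLinearMap.comp ((Finsupp.lapply i).comp n)) := by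
      apply Module.Basis.ext bM
      intro j
      have h1 : bM j = ⟨b j, hbM j⟩ := Subtype.ext (hbMj j)
      rw [h1]
      simp only [LinearMap.coe_comp, LinearMap.coe_restrictScalars, Function.comp_apply,
        Submodule.coe_subtype, AddMonoidHom.coe_toIntLinearMap, Int.coe_castAddHom,
        Finsupp.lapply_apply]
      exact Module.Basis.constr_basis b ℝ _ j
    intro x
    exact LinearMap.congr_fun hmaps x
  have fW : ∀ (i : κ), ∀ w ∈ W, f i w = 0 := by
    intro i
    have hker : W ≤ LinearMap.ker (f i) := by
      rw [← hAspan, Submodule.span_le]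
      intro x hx
      have hxM : x ∈ M := (hMΛ x).1 (hAΛ hx)
      have hxN : (⟨x, hxM⟩ : M) ∈ N := (hmemN _).2 hx
      have hn0 : n ⟨x, hxM⟩ = 0 := by
        have : N.mkQ ⟨x, hxM⟩ = 0 := by
          rw [Submodule.mkQ_apply, Submodule.Quotient.mk_eq_zero]
          exact hxN
        simp [hn, this]
      simp only [SetLike.mem_coe, LinearMap.mem_ker]
      rw [key i ⟨x, hxM⟩, hn0]
      simp
    exact fun w hw => hker hw
  -- ### Choice of semigroup representatives for the generators and their negatives
  have hgΛ : ∀ i : κ, ((g i : M) : V) ∈ Λ := fun i => (hMΛ _).2 (g i).2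
  choose s₁ hs₁S a₁ ha₁A hgs₁ using fun i : κ => hcover ((g i : M) : V) (hgΛ i)
  choose s₂ hs₂S a₂ ha₂A hgs₂ using fun i : κ => hcover (-((g i : M) : V)) (neg_mem (hgΛ i))
  -- ### Constants
  set c : κ → ℝ := fun i => ‖LinearMap.toContinuousLinearMap (f i)‖ with hc
  have hc0 : ∀ i, 0 ≤ c i := fun i => norm_nonneg _
  set K : ℝ := ∑ i, c i * (‖s₁ i‖ + ‖s₂ i‖) with hK
  have hK0 : 0 ≤ K := Finset.sum_nonneg fun i _ => by positivity
  set ε : ℝ := δ / (2 * (1 + K)) with hε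
  have hεpos : 0 < ε := by positivity
  have hεδ : ε * (1 + K) = δ / 2 := by
    rw [hε]; field_simp
  -- ### The cone
  refine ⟨{x | ∃ t : ℝ, 0 < t ∧ ‖x - t • v‖ < t * ε}, ?_, ?_, ?_, ?_, ?_⟩
  · -- convexity
    rintro x ⟨t, ht, hxt⟩ y ⟨u, hu, hyu⟩ p q hp hq hpq
    rcases eq_or_lt_of_le hp with hp0 | hp0
    · have hq1 : q = 1 := by linarith
      exact ⟨u, hu, by simpa [← hp0, hq1] using hyu⟩
    rcases eq_or_lt_of_le hq with hq0 | hq0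
    · have hp1 : p = 1 := by linarith
      exact ⟨t, ht, by simpa [← hq0, hp1] using hxt⟩
    refine ⟨p * t + q * u, by positivity, ?_⟩
    have hid : p • x + q • y - (p * t + q * u) • v = p • (x - t • v) + q • (y - u • v) := by
      module
    rw [hid]
    calc ‖p • (x - t • v) + q • (y - u • v)‖
        ≤ ‖p • (x - t • v)‖ + ‖q • (y - u • v)‖ := norm_add_le _ _
      _ = p * ‖x - t • v‖ + q * ‖y - u • v‖ := by
          rw [norm_smul, norm_smul, Real.norm_eq_abs, Real.norm_eq_abs,
            abs_of_pos hp0, abs_of_pos hq0]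
      _ < p * (t * ε) + q * (u * ε) := by
          exact add_lt_add (mul_lt_mul_of_pos_left hxt hp0) (mul_lt_mul_of_pos_left hyu hq0)
      _ = (p * t + q * u) * ε := by ring
  · -- cone
    rintro x ⟨t, ht, hxt⟩ r hr
    refine ⟨r * t, by positivity, ?_⟩
    have hid : r • x - (r * t) • v = r • (x - t • v) := by module
    rw [hid, norm_smul, Real.norm_eq_abs, abs_of_pos hr]
    calc r * ‖x - t • v‖ < r * (t * ε) := mul_lt_mul_of_pos_left hxt hr
      _ = r * t * ε := by ring
  · -- open
    have hset : {x : V | ∃ t : ℝ, 0 < t ∧ ‖x - t • v‖ < t * ε}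
        = ⋃ t ∈ Set.Ioi (0 : ℝ), Metric.ball (t • v) (t * ε) := by
      ext x
      simp [Metric.mem_ball, dist_eq_norm, Set.mem_Ioi]
    rw [hset]
    exact isOpen_biUnion fun t _ => Metric.isOpen_ball
  · -- contains v
    exact ⟨1, one_pos, by simpa using hεpos⟩
  · -- main inclusion
    rintro l ⟨hlΛ, t, ht, hlt⟩
    have hlM : l ∈ M := (hMΛ l).1 hlΛ
    set nn : κ → ℤ := fun i => n ⟨l, hlM⟩ i with hnn
    -- bound on coordinates
    have hnbound : ∀ i, |(nn i : ℝ)| ≤ c i * (t * ε) := by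
      intro i
      have h1 : (nn i : ℝ) = f i (l - t • v) := by
        rw [map_sub, fW i _ (W.smul_mem _ hvW), sub_zero, key i ⟨l, hlM⟩]
      rw [h1]
      calc |f i (l - t • v)| = ‖LinearMap.toContinuousLinearMap (f i) (l - t • v)‖ := by
            rw [Real.norm_eq_abs]; rfl
        _ ≤ c i * ‖l - t • v‖ := (LinearMap.toContinuousLinearMap (f i)).le_opNorm _
        _ ≤ c i * (t * ε) := mul_le_mul_of_nonneg_left hlt.le (hc0 i)
    set s : V := ∑ i, ((nn i).toNat • s₁ i + ((-(nn i)).toNat) • s₂ i) with hs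
    -- s is 0 or in S
    have hnsmul : ∀ x : V, (x = 0 ∨ x ∈ S) → ∀ m : ℕ, (m • x = 0 ∨ m • x ∈ S) := by
      intro x hx m
      induction m with
      | zero => left; simp
      | succ m ih =>
        rw [succ_nsmul]
        rcases ih with h0 | hS1
        · rcases hx with h0' | hS2
          · left; simp [h0, h0']
          · right; simpa [h0] using hS2
        · rcases hx with h0' | hS2
          · right; simpa [h0'] using hS1
          · right; exact hSadd _ hS1 _ hS2
    have haddP : ∀ x y : V, (x = 0 ∨ x ∈ S) → (y = 0 ∨ y ∈ S) → (x + y = 0 ∨ x + y ∈ S) := by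
      rintro x y (rfl | hx) (rfl | hy)
      · left; simp
      · right; simpa using hy
      · right; simpa using hx
      · right; exact hSadd _ hx _ hy
    have hsS0 : s = 0 ∨ s ∈ S := by
      rw [hs]
      refine Finset.sum_induction _ (fun z => z = 0 ∨ z ∈ S) haddP (Or.inl rfl) ?_
      intro i _
      exact haddP _ _ (hnsmul _ (Or.inr (hs₁S i)) _) (hnsmul _ (Or.inr (hs₂S i)) _)
    -- norm of s
    have hnatnorm : ∀ (m : ℕ) (x : V), ‖m • x‖ = (m : ℝ) * ‖x‖ := by
      intro m x
      rw [← Nat.cast_smul_eq_nsmul ℝ, norm_smul, Real.norm_natCast]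
    have htoNat1 : ∀ z : ℤ, ((z.toNat : ℝ)) ≤ |(z : ℝ)| := by
      intro z
      have : (z.toNat : ℤ) ≤ |z| := by
        rcases le_or_gt 0 z with h | h
        · rw [Int.toNat_of_nonneg h]; exact le_abs_self z
        · rw [Int.toNat_eq_zero.2 h.le]; exact abs_nonneg z
      calc ((z.toNat : ℝ)) = ((z.toNat : ℤ) : ℝ) := by push_cast; ring
        _ ≤ (|z| : ℝ) := by exact_mod_cast this
        _ = |(z : ℝ)| := by push_cast; ring
    have hsnorm : ‖s‖ ≤ t * ε * K := by
      rw [hs]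
      calc ‖∑ i, ((nn i).toNat • s₁ i + ((-(nn i)).toNat) • s₂ i)‖
          ≤ ∑ i, ‖(nn i).toNat • s₁ i + ((-(nn i)).toNat) • s₂ i‖ := norm_sum_le _ _
        _ ≤ ∑ i, (c i * (t * ε)) * (‖s₁ i‖ + ‖s₂ i‖) := by
            apply Finset.sum_le_sum
            intro i _
            have h1 : ‖(nn i).toNat • s₁ i + ((-(nn i)).toNat) • s₂ i‖
                ≤ ((nn i).toNat : ℝ) * ‖s₁ i‖ + (((-(nn i)).toNat : ℕ) : ℝ) * ‖s₂ i‖ := by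
              calc ‖(nn i).toNat • s₁ i + ((-(nn i)).toNat) • s₂ i‖
                  ≤ ‖(nn i).toNat • s₁ i‖ + ‖((-(nn i)).toNat) • s₂ i‖ := norm_add_le _ _
                _ = ((nn i).toNat : ℝ) * ‖s₁ i‖ + (((-(nn i)).toNat : ℕ) : ℝ) * ‖s₂ i‖ := by
                    rw [hnatnorm, hnatnorm]
            have h2 : ((nn i).toNat : ℝ) ≤ c i * (t * ε) :=
              le_trans (htoNat1 (nn i)) (hnbound i)
            have h3 : (((-(nn i)).toNat : ℕ) : ℝ) ≤ c i * (t * ε) := by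
              refine le_trans (htoNat1 (-(nn i))) ?_
              rw [show ((-(nn i) : ℤ) : ℝ) = -((nn i : ℤ) : ℝ) by push_cast; ring, abs_neg]
              exact hnbound i
            calc ‖(nn i).toNat • s₁ i + ((-(nn i)).toNat) • s₂ i‖
                ≤ ((nn i).toNat : ℝ) * ‖s₁ i‖ + (((-(nn i)).toNat : ℕ) : ℝ) * ‖s₂ i‖ := h1
              _ ≤ (c i * (t * ε)) * ‖s₁ i‖ + (c i * (t * ε)) * ‖s₂ i‖ := by
                  refine add_le_add ?_ ?_
                  · exact mul_le_mul_of_nonneg_right h2 (norm_nonneg _)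
                  · exact mul_le_mul_of_nonneg_right h3 (norm_nonneg _)
              _ = (c i * (t * ε)) * (‖s₁ i‖ + ‖s₂ i‖) := by ring
        _ = t * ε * K := by
            rw [hK, Finset.mul_sum]
            apply Finset.sum_congr rfl
            intro i _
            ring
    -- l - s ∈ A
    have hls : l - s ∈ A := by
      have hd : (l - ∑ i, nn i • ((g i : M) : V)) ∈ A := by
        have h0 := defect ⟨l, hlM⟩
        have h1 : ((⟨l, hlM⟩ - ∑ i, n ⟨l, hlM⟩ i • g i : M) : V) ∈ A := (hmemN _).1 h0
        have h2 : ((⟨l, hlM⟩ - ∑ i, n ⟨l, hlM⟩ i • g i : M) : V)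
            = l - ∑ i, nn i • ((g i : M) : V) := by
          push_cast
          rfl
        rwa [h2] at h1
      have h3 : (∑ i, nn i • ((g i : M) : V)) - s ∈ A := by
        rw [hs, ← Finset.sum_sub_distrib]
        apply AddSubgroup.sum_mem
        intro i _
        have hpq : ((nn i).toNat : ℤ) - (((-(nn i)).toNat : ℕ) : ℤ) = nn i := by omega
        have e1 : s₁ i = ((g i : M) : V) - a₁ i := eq_sub_of_add_eq (hgs₁ i).symm
        have e2 : s₂ i = -((g i : M) : V) - a₂ i := eq_sub_of_add_eq (hgs₂ i).symm
        have hrw : nn i • ((g i : M) : V) - ((nn i).toNat • s₁ i + ((-(nn i)).toNat) • s₂ i)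
            = ((nn i).toNat : ℤ) • a₁ i + (((-(nn i)).toNat : ℕ) : ℤ) • a₂ i := by
          rw [e1, e2,
            show ((nn i).toNat • (((g i : M) : V) - a₁ i))
              = ((nn i).toNat : ℤ) • (((g i : M) : V) - a₁ i) from (natCast_zsmul _ _).symm,
            show (((-(nn i)).toNat) • (-((g i : M) : V) - a₂ i))
              = (((-(nn i)).toNat : ℕ) : ℤ) • (-((g i : M) : V) - a₂ i) from
                (natCast_zsmul _ _).symm,
            show nn i • ((g i : M) : V)
              = (((nn i).toNat : ℤ) - (((-(nn i)).toNat : ℕ) : ℤ)) • ((g i : M) : V) from by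
                rw [hpq]]
          module
        rw [hrw]
        exact A.add_mem (A.zsmul_mem (ha₁A i) _) (A.zsmul_mem (ha₂A i) _)
      have := A.add_mem hd h3
      rwa [sub_add_sub_cancel] at this
    -- l - s ∈ C
    have hlsC : l - s ∈ C := by
      have hnorm2 : ‖(l - s) - t • v‖ < t * δ := by
        calc ‖(l - s) - t • v‖ = ‖(l - t • v) - s‖ := by
              rw [show (l - s) - t • v = (l - t • v) - s from by abel]
          _ ≤ ‖l - t • v‖ + ‖s‖ := norm_sub_le _ _
          _ < t * ε + t * ε * K := add_lt_add_of_lt_of_le hlt hsnorm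
          _ = t * (ε * (1 + K)) := by ring
          _ = t * (δ / 2) := by rw [hεδ]
          _ < t * δ := mul_lt_mul_of_pos_left (half_lt_self hδpos) ht
      have h4 : t⁻¹ • (l - s) ∈ Metric.ball v δ := by
        rw [Metric.mem_ball, dist_eq_norm]
        have heq : t⁻¹ • ((l - s) - t • v) = t⁻¹ • (l - s) - v := by
          rw [smul_sub, smul_smul, inv_mul_cancel₀ (ne_of_gt ht), one_smul]
        rw [← heq, norm_smul, Real.norm_eq_abs, abs_of_pos (inv_pos.2 ht)]
        calc t⁻¹ * ‖(l - s) - t • v‖ < t⁻¹ * (t * δ) :=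
              mul_lt_mul_of_pos_left hnorm2 (inv_pos.2 ht)
          _ = δ := inv_mul_cancel_left₀ (ne_of_gt ht) δ
      have h5 : t⁻¹ • (l - s) ∈ W := W.smul_mem _ (hAW hls)
      have h6 : t⁻¹ • (l - s) ∈ C := by rw [hCU]; exact ⟨hδball h4, h5⟩
      have h7 := hCcone _ h6 t ht
      rwa [smul_smul, mul_inv_cancel₀ (ne_of_gt ht), one_smul] at h7
    have hlsS : l - s ∈ S := hACS ⟨hls, hlsC⟩
    rcases hsS0 with h0 | hsS
    · simpa [h0] using hlsS
    · have := hSadd s hsS (l - s) hlsS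
      simpa using this
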